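/- Let (F_n) be a non-decreasing sequence of finite subsets of a well-ordered set S with S = ⋃_n F_n, let (k_n) be strictly increasing naturals, and let Σ_n ⊆ (2^{k_n})^{F_n} satisfy condition (e_f). Define K ⊆ (2^ω)^S as the set of x such that for every n there is ν ∈ Σ_n with x(β)↾k_n = ν(β) for all β ∈ F_n. Then K is a nonempty closed subset of (2^ω)^S without isolated points (i.e., K is perfect), and for each n the sets [ν] ∩ K for ν ∈ Σ_n form a partition of K into nonempty relatively clopen pieces, each containing at least two pieces of the partition at level m for every m > n. -/

import Mathlib

open Set

/-- `ν` (a level-`n` pattern, i.e. an element of `(2^{k n})^{F n}` coded as a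
function `S → ℕ → Bool`) is extended by `σ` (a level-`m` pattern): they agree
on all coordinates `(β, i)` with `β ∈ F n` and `i < k n`. -/
def PatExt {S : Type*} (F : ℕ → Finset S) (k : ℕ → ℕ) (n : ℕ)
    (ν σ : S → ℕ → Bool) : Prop :=
  ∀ β ∈ F n, ∀ i < k n, σ β i = ν β i

/-- Two level-`n` patterns are equal as elements of `(2^{k n})^{F n}`. -/
def PatEq {S : Type*} (F : ℕ → Finset S) (k : ℕ → ℕ) (n : ℕ)
    (ν ν' : S → ℕ → Bool) : Prop :=
  ∀ β ∈ F n, ∀ i < k n, ν β i = ν' β i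

/-- The cylinder `[ν]` determined by a level-`n` pattern `ν`. -/
def Cyl {S : Type*} (F : ℕ → Finset S) (k : ℕ → ℕ) (n : ℕ)
    (ν : S → ℕ → Bool) : Set (S → ℕ → Bool) :=
  {x | ∀ β ∈ F n, ∀ i < k n, x β i = ν β i}

/-- `e` is a coherent map from the set `C` of level-`n` patterns to level-`m`
patterns: each `e ν` extends `ν`, and whenever `β ∈ F n` is the minimal
coordinate at which `ν, ν' ∈ C` differ, `e ν` and `e ν'` agree on all
coordinates of `F m` below `β`. -/
def CoherentMap {S : Type*} [LinearOrder S] (F : ℕ → Finset S) (k : ℕ → ℕ)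
    (n m : ℕ) (C : Set (S → ℕ → Bool))
    (e : (S → ℕ → Bool) → (S → ℕ → Bool)) : Prop :=
  (∀ ν ∈ C, PatExt F k n ν (e ν)) ∧
  ∀ ν ∈ C, ∀ ν' ∈ C, ∀ β ∈ F n,
    ((∃ i < k n, ν β i ≠ ν' β i) ∧
      ∀ γ ∈ F n, γ < β → ∀ i < k n, ν γ i = ν' γ i) →
    ∀ γ ∈ F m, γ < β → ∀ i < k m, e ν γ i = e ν' γ i

/-- Condition `(e_f)`: for all `n < m`, every coherent map `e₀` from a set
`C ⊆ Σ_n` into `Σ_m` and every `ν₀ ∈ Σ_n ∖ C` admit two coherent extensions to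
`C ∪ {ν₀}` whose values at `ν₀` differ as level-`m` patterns. -/
def CondEf {S : Type*} [LinearOrder S] (F : ℕ → Finset S) (k : ℕ → ℕ)
    (Sig : ℕ → Set (S → ℕ → Bool)) : Prop :=
  ∀ n m : ℕ, n < m → ∀ C ⊆ Sig n,
    ∀ e₀ : (S → ℕ → Bool) → (S → ℕ → Bool),
      CoherentMap F k n m C e₀ → (∀ ν ∈ C, e₀ ν ∈ Sig m) →
      ∀ ν₀ ∈ Sig n, ν₀ ∉ C →
        ∃ e e' : (S → ℕ → Bool) → (S → ℕ → Bool),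
          CoherentMap F k n m (insert ν₀ C) e ∧
          CoherentMap F k n m (insert ν₀ C) e' ∧
          (∀ ν ∈ C, e ν = e₀ ν ∧ e' ν = e₀ ν) ∧
          (∀ ν ∈ insert ν₀ C, e ν ∈ Sig m ∧ e' ν ∈ Sig m) ∧
          ¬ PatEq F k m (e ν₀) (e' ν₀)

/-- cylinders are clopen -/
lemma cyl_clopen {S : Type*} (F : ℕ → Finset S) (k : ℕ → ℕ) (n : ℕ)
    (ν : S → ℕ → Bool) : IsClopen (Cyl F k n ν) := by
  have h : Cyl F k n ν =
      ⋂ β ∈ F n, ⋂ i ∈ Finset.range (k n), {x : S → ℕ → Bool | x β i = ν β i} := by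
    ext x; simp [Cyl]
  rw [h]
  refine isClopen_biInter_finset fun β _ => isClopen_biInter_finset fun i _ => ?_
  exact (isClopen_discrete {ν β i}).preimage ((continuous_apply i).comp (continuous_apply β))

/-- two extensions, from (e_f) with C = ∅ -/
lemma two_ext {S : Type*} [LinearOrder S] (F : ℕ → Finset S) (k : ℕ → ℕ)
    (Sig : ℕ → Set (S → ℕ → Bool)) (hef : CondEf F k Sig) :
    ∀ n m : ℕ, n < m → ∀ ν ∈ Sig n,
      ∃ σ ∈ Sig m, ∃ σ' ∈ Sig m,
        PatExt F k n ν σ ∧ PatExt F k n ν σ' ∧ ¬ PatEq F k m σ σ' := by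
  intro n m hnm ν hν
  obtain ⟨e, e', hc, hc', -, hmem, hne⟩ :=
    hef n m hnm ∅ (empty_subset _) id
      ⟨fun ν h => absurd h (notMem_empty _), fun ν h => absurd h (notMem_empty _)⟩
      (fun ν h => absurd h (notMem_empty _)) ν hν (notMem_empty _)
  exact ⟨e ν, (hmem ν (mem_insert _ _)).1, e' ν, (hmem ν (mem_insert _ _)).2,
    hc.1 ν (mem_insert _ _), hc'.1 ν (mem_insert _ _), hne⟩

/-- every cylinder of a pattern in Σ_n contains a point of K -/
lemma cyl_meets_K {S : Type*} [LinearOrder S]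
    (F : ℕ → Finset S) (hFmono : Monotone F) (hFcov : ∀ β : S, ∃ n, β ∈ F n)
    (k : ℕ → ℕ) (hk : StrictMono k)
    (Sig : ℕ → Set (S → ℕ → Bool))
    (hdown : ∀ n m : ℕ, n ≤ m → ∀ σ ∈ Sig m, ∃ ν ∈ Sig n, PatExt F k n ν σ)
    (hef : CondEf F k Sig)
    (n : ℕ) (ν : S → ℕ → Bool) (hν : ν ∈ Sig n) :
    ∃ x : S → ℕ → Bool, (∀ n', ∃ ν' ∈ Sig n', x ∈ Cyl F k n' ν') ∧ x ∈ Cyl F k n ν := by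
  classical
  -- one-step extension
  have step : ∀ m : ℕ, ∀ σ ∈ Sig m, ∃ τ ∈ Sig (m + 1), PatExt F k m σ τ := by
    intro m σ hσ
    obtain ⟨τ, hτ, -, -, h1, -, -⟩ := two_ext F k Sig hef m (m + 1) (Nat.lt_succ_self m) σ hσ
    exact ⟨τ, hτ, h1⟩
  -- the chain g : ℕ → pattern, g j at level n + j
  let ext : ℕ → (S → ℕ → Bool) → (S → ℕ → Bool) := fun m σ =>
    if h : σ ∈ Sig m then (step m σ h).choose else σ
  let g : ℕ → (S → ℕ → Bool) := fun j => Nat.rec ν (fun j' prev => ext (n + j') prev) j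
  have hg : ∀ j, g j ∈ Sig (n + j) ∧ PatExt F k (n + j) (g j) (g (j + 1)) := by
    intro j
    induction j with
    | zero =>
      refine ⟨hν, ?_⟩
      show PatExt F k (n + 0) ν (ext n ν)
      simp only [ext, dif_pos hν]
      exact (step n ν hν).choose_spec.2
    | succ j ih =>
      have hmem : g (j + 1) ∈ Sig (n + (j + 1)) := by
        have : g (j + 1) = ext (n + j) (g j) := rfl
        rw [this]
        simp only [ext, dif_pos ih.1]
        exact (step (n + j) (g j) ih.1).choose_spec.1
      refine ⟨hmem, ?_⟩
      have : g (j + 2) = ext (n + (j + 1)) (g (j + 1)) := rfl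
      rw [this]
      simp only [ext, dif_pos hmem]
      exact (step (n + (j + 1)) (g (j + 1)) hmem).choose_spec.2
  -- stability
  have hstab : ∀ j j', j ≤ j' → ∀ β ∈ F (n + j), ∀ i < k (n + j), g j' β i = g j β i := by
    intro j j' hle
    induction j' with
    | zero =>
      have : j = 0 := Nat.le_zero.mp hle
      subst this; intro β _ i _; rfl
    | succ j' ih =>
      rcases Nat.lt_or_ge j (j' + 1) with h | h
      · have hle' : j ≤ j' := Nat.lt_succ_iff.mp h
        intro β hβ i hi
        have h1 : g (j' + 1) β i = g j' β i := by
          refine (hg j').2 β ?_ i ?_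
          · exact hFmono (by omega) hβ
          · exact lt_of_lt_of_le hi (hk.monotone (by omega))
        rw [h1]; exact ih hle' β hβ i hi
      · have : j = j' + 1 := le_antisymm hle h
        subst this; intro β _ i _; rfl
  -- the point x
  let x : S → ℕ → Bool := fun β i => g (max (hFcov β).choose (i + 1)) β i
  have hx : ∀ j, ∀ β ∈ F (n + j), ∀ i < k (n + j), x β i = g j β i := by
    intro j β hβ i hi
    set J := max (hFcov β).choose (i + 1) with hJ
    have hβJ : β ∈ F (n + J) := hFmono (by omega) (hFcov β).choose_spec
    have hiJ : i < k (n + J) := lt_of_lt_of_le (by omega) (hk.le_apply (x := n + J))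
    have h1 : g (max J j) β i = g J β i := hstab J (max J j) (le_max_left _ _) β hβJ i hiJ
    have h2 : g (max J j) β i = g j β i := hstab j (max J j) (le_max_right _ _) β hβ i hi
    show g J β i = g j β i
    rw [← h1, h2]
  refine ⟨x, ?_, ?_⟩
  · intro n'
    rcases Nat.lt_or_ge n' n with h | h
    · obtain ⟨ν', hν', hext⟩ := hdown n' n (le_of_lt h) ν hν
      refine ⟨ν', hν', fun β hβ i hi => ?_⟩
      have hβn : β ∈ F n := hFmono (le_of_lt h) hβ
      have hin : i < k n := lt_of_lt_of_le hi (hk.monotone (le_of_lt h))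
      have h0 := hx 0 β (by simpa using hβn) i (by simpa using hin)
      rw [h0]
      exact hext β hβ i hi
    · obtain ⟨j, rfl⟩ := Nat.exists_eq_add_of_le h
      exact ⟨g j, (hg j).1, fun β hβ i hi => hx j β hβ i hi⟩
  · intro β hβ i hi
    have := hx 0 β (by simpa using hβ) i (by simpa using hi)
    exact this

/-- every neighborhood of x contains the level-n cylinder of x for some n -/
lemma nhds_cyl {S : Type*} (F : ℕ → Finset S) (hFmono : Monotone F)
    (hFcov : ∀ β : S, ∃ n, β ∈ F n) (k : ℕ → ℕ) (hk : StrictMono k)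
    (x : S → ℕ → Bool) (U : Set (S → ℕ → Bool)) (hU : U ∈ nhds x) :
    ∃ n, Cyl F k n x ⊆ U := by
  classical
  obtain ⟨V, hVU, hVopen, hxV⟩ := mem_nhds_iff.mp hU
  obtain ⟨I, u, hIu, hpi⟩ := isOpen_pi_iff.mp hVopen x hxV
  have h2 : ∀ β ∈ I, ∃ (J : Finset ℕ) (v : ℕ → Set Bool),
      (∀ i ∈ J, IsOpen (v i) ∧ x β i ∈ v i) ∧ (J : Set ℕ).pi v ⊆ u β := by
    intro β hβ
    exact isOpen_pi_iff.mp (hIu β hβ).1 (x β) (hIu β hβ).2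
  choose! J v hJv hJpi using h2
  set n₁ : ℕ := I.sup fun β => (hFcov β).choose with hn₁
  set M : ℕ := I.sup fun β => (J β).sup id with hM
  refine ⟨max n₁ (M + 1), ?_⟩
  intro y hy
  apply hVU
  apply hpi
  intro β hβ
  apply hJpi β hβ
  intro i hi
  have hi' : i ∈ J β := hi
  have hiM : i ≤ M :=
    le_trans (Finset.le_sup (f := id) hi')
      (Finset.le_sup (f := fun β => (J β).sup id) hβ)
  have hik : i < k (max n₁ (M + 1)) :=
    lt_of_lt_of_le (by omega : i < max n₁ (M + 1)) hk.le_apply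
  have hβF : β ∈ F (max n₁ (M + 1)) := by
    have h1 : (hFcov β).choose ≤ max n₁ (M + 1) :=
      le_trans (Finset.le_sup (f := fun β => (hFcov β).choose) hβ) (le_max_left _ _)
    exact hFmono h1 (hFcov β).choose_spec
  have := hy β hβF i hik
  rw [this]
  exact (hJv β hβ i hi').2

/-- The perfect-set construction of Section 2: given a non-decreasing sequence
`F` of finite subsets of the well-ordered set `S` covering `S`, strictly
increasing `k`, and pattern families `Σ_n` (nonempty, downward coherent)
satisfying `(e_f)`, the set
`K = {x : (2^ω)^S | ∀ n, ∃ ν ∈ Σ_n, x ∈ [ν]}` is a nonempty perfect (closed,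
crowded) set; for each `n` the traces `[ν] ∩ K` (`ν ∈ Σ_n`) are nonempty,
relatively clopen, cover `K`, are pairwise equal or disjoint, and for every
`m > n` each `ν ∈ Σ_n` has at least two `Σ_m`-extensions which differ as
level-`m` patterns. -/
theorem perfect_kernel_of_condEf {S : Type*} [LinearOrder S] [WellFoundedLT S]
    (F : ℕ → Finset S) (hFmono : Monotone F) (hFcov : ∀ β : S, ∃ n, β ∈ F n)
    (k : ℕ → ℕ) (hk : StrictMono k)
    (Sig : ℕ → Set (S → ℕ → Bool))
    (hne : ∀ n, (Sig n).Nonempty)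
    (hdown : ∀ n m : ℕ, n ≤ m → ∀ σ ∈ Sig m, ∃ ν ∈ Sig n, PatExt F k n ν σ)
    (hef : CondEf F k Sig) :
    (Perfect {x : S → ℕ → Bool | ∀ n, ∃ ν ∈ Sig n, x ∈ Cyl F k n ν} ∧
      ({x : S → ℕ → Bool | ∀ n, ∃ ν ∈ Sig n, x ∈ Cyl F k n ν}).Nonempty) ∧
    ∀ n : ℕ,
      (∀ ν ∈ Sig n,
        (Cyl F k n ν ∩
          {x : S → ℕ → Bool | ∀ n', ∃ ν' ∈ Sig n', x ∈ Cyl F k n' ν'}).Nonempty) ∧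
      ({x : S → ℕ → Bool | ∀ n', ∃ ν' ∈ Sig n', x ∈ Cyl F k n' ν'} ⊆
        ⋃ ν ∈ Sig n, Cyl F k n ν) ∧
      (∀ ν ∈ Sig n, ∀ ν' ∈ Sig n,
        Cyl F k n ν = Cyl F k n ν' ∨ Cyl F k n ν ∩ Cyl F k n ν' = ∅) ∧
      (∀ ν ∈ Sig n,
        IsClopen ((fun x : {x : S → ℕ → Bool |
            ∀ n', ∃ ν' ∈ Sig n', x ∈ Cyl F k n' ν'} => (x : S → ℕ → Bool)) ⁻¹'
          Cyl F k n ν)) ∧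
      (∀ m : ℕ, n < m → ∀ ν ∈ Sig n,
        ∃ σ ∈ Sig m, ∃ σ' ∈ Sig m,
          PatExt F k n ν σ ∧ PatExt F k n ν σ' ∧ ¬ PatEq F k m σ σ') := by
  classical
  set K := {x : S → ℕ → Bool | ∀ n, ∃ ν ∈ Sig n, x ∈ Cyl F k n ν} with hK
  have hmeets : ∀ n, ∀ ν ∈ Sig n, (Cyl F k n ν ∩ K).Nonempty := by
    intro n ν hν
    obtain ⟨x, hx1, hx2⟩ := cyl_meets_K F hFmono hFcov k hk Sig hdown hef n ν hν
    exact ⟨x, hx2, hx1⟩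
  have hKclosed : IsClosed K := by
    rw [← isOpen_compl_iff, isOpen_iff_mem_nhds]
    intro x hx
    simp only [mem_compl_iff, hK, mem_setOf_eq, not_forall] at hx
    obtain ⟨n, hn⟩ := hx
    push_neg at hn
    refine Filter.mem_of_superset
      ((cyl_clopen F k n x).2.mem_nhds (fun β hβ i hi => rfl)) ?_
    intro y hy hyK
    obtain ⟨ν, hν, hyν⟩ := hyK n
    exact hn ν hν (fun β hβ i hi => by
      rw [← hy β hβ i hi]; exact hyν β hβ i hi)
  have hacc : ∀ x ∈ K, AccPt x (Filter.principal K) := by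
    intro x hx
    rw [accPt_iff_nhds]
    intro U hU
    obtain ⟨n, hn⟩ := nhds_cyl F hFmono hFcov k hk x U hU
    obtain ⟨ν, hν, hxν⟩ := hx n
    obtain ⟨σ, hσ, σ', hσ', hext, hext', hnep⟩ :=
      two_ext F k Sig hef n (n + 1) (Nat.lt_succ_self n) ν hν
    obtain ⟨y, hyσ, hyK⟩ := hmeets (n + 1) σ hσ
    obtain ⟨y', hy'σ, hy'K⟩ := hmeets (n + 1) σ' hσ'
    have hyy' : y ≠ y' := by
      intro h
      apply hnep
      intro β hβ i hi
      rw [← hyσ β hβ i hi, ← hy'σ β hβ i hi, h]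
    have hsub : ∀ (τ : S → ℕ → Bool), PatExt F k n ν τ →
        ∀ z ∈ Cyl F k (n + 1) τ, z ∈ Cyl F k n x := by
      intro τ hτ z hz β hβ i hi
      have h1 : z β i = τ β i :=
        hz β (hFmono (Nat.le_succ n) hβ) i (lt_trans hi (hk (Nat.lt_succ_self n)))
      rw [h1, hτ β hβ i hi, ← hxν β hβ i hi]
    have hyU : y ∈ U := hn (hsub σ hext y hyσ)
    have hy'U : y' ∈ U := hn (hsub σ' hext' y' hy'σ)
    rcases eq_or_ne y x with rfl | hne2
    · exact ⟨y', ⟨hy'U, hy'K⟩, fun h => hyy' h.symm⟩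
    · exact ⟨y, ⟨hyU, hyK⟩, hne2⟩
  have hKne : K.Nonempty := by
    obtain ⟨ν, hν⟩ := hne 0
    obtain ⟨x, hx1, hx2⟩ := hmeets 0 ν hν
    exact ⟨x, hx2⟩
  refine ⟨⟨⟨hKclosed, hacc⟩, hKne⟩, fun n => ⟨hmeets n, ?_, ?_, ?_, ?_⟩⟩
  · intro x hx
    obtain ⟨ν, hν, hxν⟩ := hx n
    exact mem_biUnion hν hxν
  · intro ν _ ν' _
    rcases eq_empty_or_nonempty (Cyl F k n ν ∩ Cyl F k n ν') with h | ⟨z, hz1, hz2⟩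
    · exact Or.inr h
    · left; ext y
      constructor <;> intro hy β hβ i hi
      · rw [hy β hβ i hi, ← hz1 β hβ i hi, hz2 β hβ i hi]
      · rw [hy β hβ i hi, ← hz2 β hβ i hi, hz1 β hβ i hi]
  · intro ν _
    exact (cyl_clopen F k n ν).preimage continuous_subtype_val
  · intro m hm ν hν
    exact two_ext F k Sig hef n m hm ν hν
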